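/- Let A be a set with mul : A → A → Option A a Frobenius algebra in Rel, i.e. satisfying (Surj), (C), (A) and (F) as in the context. Then A is a disjoint union of abelian groups: the relation a ~ b := (mul a b).isSome is an equivalence relation on A, the multiplication is total and internal on each equivalence class (for all b, c with a ~ b and a ~ c there exists d with mul b c = some d and a ~ d), and each equivalence class is an abelian group: for every a there exists e with a ~ e such that mul e b = some b for every b with a ~ b, and for every b with a ~ b there exists b' with a ~ b' and mul b b' = some e. -/

import Mathlib

/-- A Frobenius algebra in Rel is a disjoint union of abelian groups. -/
theorem rel_frobenius_disjoint_union_of_groups {A : Type*} (mul : A → A → Option A)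
    (hSurj : ∀ c : A, ∃ a b : A, mul a b = some c)
    (hC : ∀ a b : A, mul a b = mul b a)
    (hA : ∀ a b c : A,
      (mul a b).bind (fun w => mul w c) = (mul b c).bind (fun v => mul a v))
    (hF : ∀ a b c d : A,
      (∃ e, mul a b = some e ∧ mul c d = some e) ↔
      (∃ b₁, mul b₁ d = some b ∧ mul a b₁ = some c)) :
    Equivalence (fun a b : A => (mul a b).isSome = true) ∧
    (∀ a b c : A, (mul a b).isSome → (mul a c).isSome →
      ∃ d : A, mul b c = some d ∧ (mul a d).isSome) ∧
    (∀ a : A, ∃ e : A, (mul a e).isSome ∧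
      (∀ b : A, (mul a b).isSome → mul e b = some b) ∧
      (∀ b : A, (mul a b).isSome → ∃ b' : A, (mul a b').isSome ∧ mul b b' = some e)) := by
  -- (U) local units
  have U : ∀ a b e : A, mul a b = some e → ∃ u, mul u b = some b ∧ mul a u = some a := by
    intro a b e h
    exact (hF a b a b).mp ⟨e, h, h⟩
  -- (D) division
  have D : ∀ a b e : A, mul a b = some e → ∃ t, mul t b = some a := by
    intro a b e h
    obtain ⟨t, ht, _⟩ := (hF b a a b).mp ⟨e, (hC b a).trans h, h⟩
    exact ⟨t, ht⟩
  -- (T) reverse Frobenius: strong associativity/totality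
  have T : ∀ a x d p q : A, mul a x = some p → mul x d = some q →
      ∃ e, mul a q = some e ∧ mul p d = some e := by
    intro a x d p q hax hxd
    exact (hF a q p d).mpr ⟨x, hxd, hax⟩
  -- (P) a is related to its products
  have P : ∀ a b c : A, mul a b = some c → ∃ w, mul a c = some w := by
    intro a b c h
    obtain ⟨v, hva, hbv⟩ := U b a c ((hC b a).trans h)
    obtain ⟨e, he1, he2⟩ := T a b v c b h hbv
    have hcv : mul c v = some c := by
      rw [h] at he1; injection he1 with h'; subst h'; exact he2
    exact (T a v c a c ((hC a v).trans hva) ((hC v c).trans hcv)).imp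
      fun e ⟨h1, _⟩ => h1
  -- transitivity of ~
  have trans : ∀ a b c p q : A, mul a b = some p → mul b c = some q →
      ∃ w, mul a c = some w := by
    intro a b c p q hab hbc
    obtain ⟨u1, hu1b, hau1⟩ := U a b p hab
    obtain ⟨u2, hu2c, hbu2⟩ := U b c q hbc
    obtain ⟨t, htb, hu1t⟩ := (hF u1 b u2 b).mp ⟨b, hu1b, (hC u2 b).trans hbu2⟩
    obtain ⟨w, hu1u2⟩ := P u1 t u2 hu1t
    obtain ⟨e, _, hau2⟩ := T a u1 u2 a w hau1 hu1u2
    obtain ⟨e', hac, _⟩ := T a u2 c e c hau2 hu2c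
    exact ⟨e', hac⟩
  -- reflexivity
  have refl : ∀ a : A, ∃ w, mul a a = some w := by
    intro a
    obtain ⟨x, y, hxy⟩ := hSurj a
    obtain ⟨w, hxa⟩ := P x y a hxy
    exact trans a x a w w ((hC a x).trans hxa) hxa
  refine ⟨⟨?_, ?_, ?_⟩, ?_, ?_⟩
  · intro a
    obtain ⟨w, hw⟩ := refl a
    simp [hw]
  · intro a b h
    rw [hC b a]; exact h
  · intro a b c hab hbc
    obtain ⟨p, hp⟩ := Option.isSome_iff_exists.mp hab
    obtain ⟨q, hq⟩ := Option.isSome_iff_exists.mp hbc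
    obtain ⟨w, hw⟩ := trans a b c p q hp hq
    simp [hw]
  · intro a b c hab hac
    obtain ⟨p, hp⟩ := Option.isSome_iff_exists.mp hab
    obtain ⟨q, hq⟩ := Option.isSome_iff_exists.mp hac
    obtain ⟨d, hd⟩ := trans b a c p q ((hC b a).trans hp) hq
    obtain ⟨w, hbw⟩ := P b c d hd
    obtain ⟨w', haw⟩ := trans a b d p w hp hbw
    exact ⟨d, hd, by simp [haw]⟩
  · intro a
    obtain ⟨r, hr⟩ := refl a
    obtain ⟨u, hua, hau⟩ := U a a r hr
    have unit : ∀ b c : A, mul a b = some c → mul u b = some b := by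
      intro b c h
      obtain ⟨t, hta⟩ := D b a c ((hC b a).trans h)
      have h1 : mul a t = some b := (hC a t).trans hta
      have h2 := hA u a t
      rw [hua, h1] at h2
      simp only [Option.bind_some] at h2
      rw [h1] at h2
      exact h2.symm
    refine ⟨u, by simp [hau], fun b hb => ?_, fun b hb => ?_⟩
    · obtain ⟨c, hc⟩ := Option.isSome_iff_exists.mp hb
      exact unit b c hc
    · obtain ⟨c, hc⟩ := Option.isSome_iff_exists.mp hb
      have hub : mul u b = some b := unit b c hc
      obtain ⟨t, htb⟩ := D u b b hub
      obtain ⟨w, hat⟩ := trans a b t c u hc ((hC b t).trans htb)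
      exact ⟨t, by simp [hat], (hC b t).trans htb⟩
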